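/- If operators A^0,...,A^{n−1} on C^d ⊗ C^d satisfy the dual feasibility condition A^i + V A^j V + (I⊗D^{ij} V + h.c.) ≥ 0 for all i,j and some matrices D^{ij} with D^{ij}=(D^{ji})† and D^{ii}=0, then the witness operators W_i = Tr_2 A^i satisfy Σ_i Tr(W_i M_i) ≥ 0 for every projectively simulable POVM (M_0,...,M_{n−1}). -/

import Mathlib

open Matrix Kronecker BigOperators ComplexOrder

noncomputable section

/-- The swap operator on `ℂ^d ⊗ ℂ^d`. -/
def swapOp (d : ℕ) : Matrix (Fin d × Fin d) (Fin d × Fin d) ℂ :=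
  fun p q => if p.1 = q.2 ∧ p.2 = q.1 then 1 else 0

/-- Partial trace over the second tensor factor. -/
def ptrace2 (d : ℕ) (M : Matrix (Fin d × Fin d) (Fin d × Fin d) ℂ) :
    Matrix (Fin d) (Fin d) ℂ :=
  fun i j => ∑ k, M (i, k) (j, k)

/-- A projective measurement. -/
def IsProjMeas (d n : ℕ) (P : Fin n → Matrix (Fin d) (Fin d) ℂ) : Prop :=
  (∀ i, (P i)ᴴ = P i) ∧
  (∀ i j, P i * P j = if i = j then P i else 0) ∧
  ∑ i, P i = 1

/-- Projective simulability. -/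
def Simulable (d n : ℕ) (M : Fin n → Matrix (Fin d) (Fin d) ℂ) : Prop :=
  ∃ (N : ℕ) (p : Fin N → ℝ) (P : Fin N → Fin n → Matrix (Fin d) (Fin d) ℂ),
    (∀ k, 0 ≤ p k) ∧ (∑ k, p k = 1) ∧ (∀ k, IsProjMeas d n (P k)) ∧
    (∀ i, M i = ∑ k, (p k : ℂ) • P k i)

variable {d : ℕ}

lemma swap_mul_kron (X Y : Matrix (Fin d) (Fin d) ℂ) :
    swapOp d * (X ⊗ₖ Y) = (Y ⊗ₖ X) * swapOp d := by
  ext ⟨a, b⟩ ⟨c, e⟩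
  simp [swapOp, mul_apply, kroneckerMap_apply, Fintype.sum_prod_type, ite_and,
    Finset.sum_ite_eq, Finset.sum_ite_eq', mul_comm]

lemma swap_mul_swap : swapOp d * swapOp d = 1 := by
  ext ⟨a, b⟩ ⟨c, e⟩
  simp [swapOp, mul_apply, Fintype.sum_prod_type, ite_and,
    Finset.sum_ite_eq, Finset.sum_ite_eq', one_apply, Prod.ext_iff, and_comm]

lemma trace_kron_swap (X Y : Matrix (Fin d) (Fin d) ℂ) :
    ((X ⊗ₖ Y) * swapOp d).trace = (X * Y).trace := by
  simp [trace, diag, mul_apply, swapOp, kroneckerMap_apply, Fintype.sum_prod_type, ite_and,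
    Finset.sum_ite_eq, Finset.sum_ite_eq']

lemma trace_mul_kron_one (A : Matrix (Fin d × Fin d) (Fin d × Fin d) ℂ)
    (P : Matrix (Fin d) (Fin d) ℂ) :
    (A * (P ⊗ₖ (1 : Matrix (Fin d) (Fin d) ℂ))).trace = (ptrace2 d A * P).trace := by
  simp only [trace, diag, mul_apply, ptrace2, kroneckerMap_apply, Fintype.sum_prod_type,
    one_apply, mul_ite, mul_one, mul_zero, Finset.sum_ite_eq, Finset.sum_ite_eq',
    Finset.mem_univ, if_true]
  refine Finset.sum_congr rfl fun a _ => ?_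
  rw [Finset.sum_comm]
  simp [Finset.sum_mul]

lemma kron_conjT (X Y : Matrix (Fin d) (Fin d) ℂ) : (X ⊗ₖ Y)ᴴ = Xᴴ ⊗ₖ Yᴴ := by
  ext ⟨a, b⟩ ⟨c, e⟩
  simp [conjTranspose_apply, kroneckerMap_apply]

lemma kron_sum_right {ι : Type*} (s : Finset ι) (X : Matrix (Fin d) (Fin d) ℂ)
    (Y : ι → Matrix (Fin d) (Fin d) ℂ) :
    X ⊗ₖ (∑ j ∈ s, Y j) = ∑ j ∈ s, X ⊗ₖ Y j := by
  ext ⟨a, b⟩ ⟨c, e⟩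
  simp [kroneckerMap_apply, Finset.mul_sum, Matrix.sum_apply]

lemma kron_sum_left {ι : Type*} (s : Finset ι) (X : Matrix (Fin d) (Fin d) ℂ)
    (Y : ι → Matrix (Fin d) (Fin d) ℂ) :
    (∑ j ∈ s, Y j) ⊗ₖ X = ∑ j ∈ s, Y j ⊗ₖ X := by
  ext ⟨a, b⟩ ⟨c, e⟩
  simp [kroneckerMap_apply, Finset.sum_mul, Matrix.sum_apply]

lemma kron_psd {X Y : Matrix (Fin d) (Fin d) ℂ} (hX : X.PosSemidef) (hY : Y.PosSemidef) :
    (X ⊗ₖ Y).PosSemidef := by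
  open MatrixOrder in obtain ⟨B, rfl⟩ := CStarAlgebra.nonneg_iff_eq_star_mul_self.mp hX.nonneg
  open MatrixOrder in obtain ⟨C, rfl⟩ := CStarAlgebra.nonneg_iff_eq_star_mul_self.mp hY.nonneg
  rw [star_eq_conjTranspose, star_eq_conjTranspose]
  rw [mul_kronecker_mul, ← kron_conjT]
  exact posSemidef_conjTranspose_mul_self _

lemma psd_trace_nonneg {m : Type*} [Fintype m] [DecidableEq m]
    {X : Matrix m m ℂ} (hX : X.PosSemidef) : 0 ≤ X.trace := by
  exact hX.trace_nonneg

lemma psd_trace_mul_nonneg {m : Type*} [Fintype m] [DecidableEq m]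
    {X R : Matrix m m ℂ} (hX : X.PosSemidef) (hR : R.PosSemidef) : 0 ≤ (X * R).trace := by
  open MatrixOrder in obtain ⟨B, rfl⟩ := CStarAlgebra.nonneg_iff_eq_star_mul_self.mp hR.nonneg
  rw [star_eq_conjTranspose]
  rw [← Matrix.mul_assoc, trace_mul_cycle]
  exact psd_trace_nonneg (hX.mul_mul_conjTranspose_same B)

/-- Key step: for a single projective measurement the witness value is nonnegative. -/
lemma key_step (d n : ℕ)
    (A : Fin n → Matrix (Fin d × Fin d) (Fin d × Fin d) ℂ)
    (D : Fin n → Fin n → Matrix (Fin d) (Fin d) ℂ)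
    (hDii : ∀ i, D i i = 0)
    (hfeas : ∀ i j,
      (A i + swapOp d * A j * swapOp d +
        ((((1 : Matrix (Fin d) (Fin d) ℂ) ⊗ₖ D i j) * swapOp d) +
         (((1 : Matrix (Fin d) (Fin d) ℂ) ⊗ₖ D i j) * swapOp d)ᴴ)).PosSemidef)
    (P : Fin n → Matrix (Fin d) (Fin d) ℂ) (hP : IsProjMeas d n P) :
    0 ≤ ∑ i, (ptrace2 d (A i) * P i).trace := by
  obtain ⟨hherm, horth, hsum⟩ := hP
  have hPpsd : ∀ i, (P i).PosSemidef := by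
    intro i
    have h : P i = (P i)ᴴ * (P i) := by
      rw [hherm i]
      simpa using (horth i i).symm
    rw [h]
    exact posSemidef_conjTranspose_mul_self _
  set s : ℂ := ∑ i, (ptrace2 d (A i) * P i).trace with hs
  -- the cross term vanishes
  have hC : ∀ i j, ((((1 : Matrix (Fin d) (Fin d) ℂ) ⊗ₖ D i j) * swapOp d)
      * (P i ⊗ₖ P j)).trace = 0 := by
    intro i j
    rw [Matrix.mul_assoc, swap_mul_kron, ← Matrix.mul_assoc, ← mul_kronecker_mul,
      trace_kron_swap, Matrix.one_mul, ← Matrix.mul_assoc, trace_mul_cycle, horth i j]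
    by_cases h : i = j
    · subst h; simp [hDii]
    · simp [h]
  have hCH : ∀ i j, (((((1 : Matrix (Fin d) (Fin d) ℂ) ⊗ₖ D i j) * swapOp d)ᴴ)
      * (P i ⊗ₖ P j)).trace = 0 := by
    intro i j
    have hR : (P i ⊗ₖ P j)ᴴ = P i ⊗ₖ P j := by
      rw [kron_conjT, hherm, hherm]
    have h1 : ((P i ⊗ₖ P j) * (((1 : Matrix (Fin d) (Fin d) ℂ) ⊗ₖ D i j) * swapOp d))ᴴ
        = ((((1 : Matrix (Fin d) (Fin d) ℂ) ⊗ₖ D i j) * swapOp d)ᴴ) * (P i ⊗ₖ P j) := by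
      rw [conjTranspose_mul, hR]
    rw [← h1, trace_conjTranspose, trace_mul_comm, hC i j, star_zero]
  -- the swapped term
  have hT2 : ∀ i j, ((swapOp d * A j * swapOp d) * (P i ⊗ₖ P j)).trace
      = (A j * (P j ⊗ₖ P i)).trace := by
    intro i j
    have h1 : (swapOp d * A j * swapOp d) * (P i ⊗ₖ P j)
        = swapOp d * (A j * (swapOp d * (P i ⊗ₖ P j))) := by
      simp only [Matrix.mul_assoc]
    rw [h1, trace_mul_comm, Matrix.mul_assoc, ← Matrix.mul_assoc _ _ (swapOp d),
      swap_mul_kron, Matrix.mul_assoc (A j), Matrix.mul_assoc,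
      swap_mul_swap, Matrix.mul_one]
  -- total sum
  have htot : 0 ≤ ∑ i, ∑ j,
      ((A i + swapOp d * A j * swapOp d +
        ((((1 : Matrix (Fin d) (Fin d) ℂ) ⊗ₖ D i j) * swapOp d) +
         (((1 : Matrix (Fin d) (Fin d) ℂ) ⊗ₖ D i j) * swapOp d)ᴴ)) * (P i ⊗ₖ P j)).trace :=
    Finset.sum_nonneg fun i _ => Finset.sum_nonneg fun j _ =>
      psd_trace_mul_nonneg (hfeas i j) (kron_psd (hPpsd i) (hPpsd j))
  have hexp : (∑ i, ∑ j,
      ((A i + swapOp d * A j * swapOp d +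
        ((((1 : Matrix (Fin d) (Fin d) ℂ) ⊗ₖ D i j) * swapOp d) +
         (((1 : Matrix (Fin d) (Fin d) ℂ) ⊗ₖ D i j) * swapOp d)ᴴ)) * (P i ⊗ₖ P j)).trace)
      = s + s := by
    have hsplit : ∀ i j,
        ((A i + swapOp d * A j * swapOp d +
          ((((1 : Matrix (Fin d) (Fin d) ℂ) ⊗ₖ D i j) * swapOp d) +
           (((1 : Matrix (Fin d) (Fin d) ℂ) ⊗ₖ D i j) * swapOp d)ᴴ)) * (P i ⊗ₖ P j)).trace
        = (A i * (P i ⊗ₖ P j)).trace + (A j * (P j ⊗ₖ P i)).trace := by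
      intro i j
      simp only [Matrix.add_mul, trace_add]
      rw [hC i j, hCH i j, hT2 i j]
      ring
    simp only [hsplit]
    simp only [Finset.sum_add_distrib]
    congr 1
    · -- ∑ i ∑ j Tr(A i (P i ⊗ P j)) = s
      refine Finset.sum_congr rfl fun i _ => ?_
      rw [← trace_sum, ← Matrix.mul_sum, ← kron_sum_right, hsum, trace_mul_kron_one]
    · rw [Finset.sum_comm]
      refine Finset.sum_congr rfl fun j _ => ?_
      rw [← trace_sum, ← Matrix.mul_sum, ← kron_sum_right, hsum, trace_mul_kron_one]
  rw [hexp] at htot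
  obtain ⟨hre, him⟩ := Complex.nonneg_iff.mp htot
  refine Complex.nonneg_iff.mpr ⟨?_, ?_⟩
  · simp only [Complex.add_re] at hre; linarith
  · simp only [Complex.add_im] at him; linarith

/-- Non-simulability witnesses: if the `A^i` satisfy the dual feasibility condition
`A^i + V A^j V + (I ⊗ D^{ij}) V + h.c. ≥ 0` for some `D^{ij}` with `D^{ij} = (D^{ji})†`
and `D^{ii} = 0`, then the witness operators `W_i = Tr_2 A^i` satisfy
`Σ_i Tr(W_i M_i) ≥ 0` for every projectively simulable POVM `M`. -/
theorem witness_nonneg_on_simulable (d n : ℕ)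
    (A : Fin n → Matrix (Fin d × Fin d) (Fin d × Fin d) ℂ)
    (D : Fin n → Fin n → Matrix (Fin d) (Fin d) ℂ)
    (hD : ∀ i j, D i j = (D j i)ᴴ) (hDii : ∀ i, D i i = 0)
    (hfeas : ∀ i j,
      (A i + swapOp d * A j * swapOp d +
        ((((1 : Matrix (Fin d) (Fin d) ℂ) ⊗ₖ D i j) * swapOp d) +
         (((1 : Matrix (Fin d) (Fin d) ℂ) ⊗ₖ D i j) * swapOp d)ᴴ)).PosSemidef)
    (M : Fin n → Matrix (Fin d) (Fin d) ℂ) (hM : Simulable d n M) :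
    0 ≤ (∑ i, (ptrace2 d (A i) * M i).trace).re ∧
    (∑ i, (ptrace2 d (A i) * M i).trace).im = 0 := by
  obtain ⟨N, p, P, hp, hpsum, hproj, hMdef⟩ := hM
  have hkey : ∀ k, 0 ≤ ∑ i, (ptrace2 d (A i) * P k i).trace :=
    fun k => key_step d n A D hDii hfeas (P k) (hproj k)
  have hrw : (∑ i, (ptrace2 d (A i) * M i).trace)
      = ∑ k, (p k : ℂ) * ∑ i, (ptrace2 d (A i) * P k i).trace := by
    calc ∑ i, (ptrace2 d (A i) * M i).trace
        = ∑ i, ∑ k, (p k : ℂ) * (ptrace2 d (A i) * P k i).trace := by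
          refine Finset.sum_congr rfl fun i _ => ?_
          rw [hMdef i, Matrix.mul_sum, trace_sum]
          refine Finset.sum_congr rfl fun k _ => ?_
          rw [Matrix.mul_smul, trace_smul, smul_eq_mul]
      _ = ∑ k, (p k : ℂ) * ∑ i, (ptrace2 d (A i) * P k i).trace := by
          rw [Finset.sum_comm]
          exact Finset.sum_congr rfl fun k _ => (Finset.mul_sum _ _ _).symm
  have htotal : 0 ≤ ∑ k, (p k : ℂ) * ∑ i, (ptrace2 d (A i) * P k i).trace := by
    refine Finset.sum_nonneg fun k _ => ?_
    obtain ⟨hre, him⟩ := Complex.nonneg_iff.mp (hkey k)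
    refine Complex.nonneg_iff.mpr ⟨?_, ?_⟩
    · simp only [Complex.mul_re, Complex.ofReal_re, Complex.ofReal_im, zero_mul, sub_zero]
      exact mul_nonneg (hp k) hre
    · simp only [Complex.mul_im, Complex.ofReal_re, Complex.ofReal_im, zero_mul, add_zero,
        ← him, mul_zero]
  rw [hrw]
  obtain ⟨h1, h2⟩ := Complex.nonneg_iff.mp htotal
  exact ⟨h1, h2.symm⟩
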